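/- Let N ≥ 2 be an integer, x₀ ∈ ℂ, μ ∈ ℂ, and let h have form (F_N) at x₀ (h analytic on a punctured disc around x₀, h(x) + N(N−1)/(x−x₀)² extending analytically across x₀ with odd Taylor coefficients of orders 1, …, 2N−3 vanishing). Let u be a solution of u'' + h·u = 0 of the dominant form u(x) = (x−x₀)^{1−N}·ψ(x), where ψ is analytic at x₀, ψ(x₀) ≠ 0, and the odd-order Taylor coefficients of ψ of orders 1, 3, …, 2N−3 vanish. Then the function h̃(x) := μ − h(x) − 2·(u'(x)/u(x))² has form (F_{N−1}) at x₀: h̃(x) + (N−1)(N−2)/(x−x₀)² extends analytically across x₀ and (when N ≥ 3) the odd-order Taylor coefficients of this extension of orders 1, 3, …, 2N−5 vanish; in particular for N = 2 the function h̃ itself extends analytically across x₀. -/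

import Mathlib

open Filter Topology Set

private lemma aux_derivAnalytic {f : ℂ → ℂ} {c : ℂ} (hf : AnalyticAt ℂ f c) :
    AnalyticAt ℂ (deriv f) c :=
  (AnalyticOnNhd.deriv (fun _ hx => hx : AnalyticOnNhd ℂ f {y | AnalyticAt ℂ f y})) c hf

private lemma aux_iteratedDeriv_add {c : ℂ} : ∀ (k : ℕ) (f g : ℂ → ℂ), AnalyticAt ℂ f c →
    AnalyticAt ℂ g c → iteratedDeriv k (fun x => f x + g x) c
      = iteratedDeriv k f c + iteratedDeriv k g c := by
  intro k
  induction k with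
  | zero => intro f g _ _; simp
  | succ k ih =>
    intro f g hf hg
    have hev : deriv (fun x => f x + g x) =ᶠ[𝓝 c] fun x => deriv f x + deriv g x := by
      filter_upwards [hf.eventually_analyticAt, hg.eventually_analyticAt] with y hfy hgy
      exact deriv_add hfy.differentiableAt hgy.differentiableAt
    rw [iteratedDeriv_succ', iteratedDeriv_succ' (f := f), iteratedDeriv_succ' (f := g),
      hev.iteratedDeriv_eq k]
    exact ih _ _ (aux_derivAnalytic hf) (aux_derivAnalytic hg)

private lemma aux_iteratedDeriv_const_mul {c a : ℂ} : ∀ (k : ℕ) (f : ℂ → ℂ), AnalyticAt ℂ f c →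
    iteratedDeriv k (fun x => a * f x) c = a * iteratedDeriv k f c := by
  intro k
  induction k with
  | zero => intro f _; simp
  | succ k ih =>
    intro f hf
    have hev : deriv (fun x => a * f x) =ᶠ[𝓝 c] fun x => a * deriv f x := by
      filter_upwards [hf.eventually_analyticAt] with y hfy
      exact deriv_const_mul a hfy.differentiableAt
    rw [iteratedDeriv_succ', iteratedDeriv_succ' (f := f), hev.iteratedDeriv_eq k]
    exact ih _ (aux_derivAnalytic hf)

private lemma aux_iteratedDeriv_sub {c : ℂ} (k : ℕ) (f g : ℂ → ℂ) (hf : AnalyticAt ℂ f c)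
    (hg : AnalyticAt ℂ g c) : iteratedDeriv k (fun x => f x - g x) c
      = iteratedDeriv k f c - iteratedDeriv k g c := by
  have h1 : (fun x => f x - g x) = fun x => f x + (-1 : ℂ) * g x := by funext x; ring
  rw [h1, aux_iteratedDeriv_add k f (fun x => (-1 : ℂ) * g x) hf (analyticAt_const.mul hg),
    aux_iteratedDeriv_const_mul k g hg]
  ring

private lemma aux_pow_mul (c : ℂ) : ∀ (m : ℕ) (H : ℂ → ℂ), AnalyticAt ℂ H c →
    (∀ k < m, iteratedDeriv k (fun x => (x - c) ^ m * H x) c = 0) ∧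
    iteratedDeriv m (fun x => (x - c) ^ m * H x) c = (m.factorial : ℂ) * H c := by
  intro m
  induction m with
  | zero =>
    intro H _
    refine ⟨fun k hk => absurd hk (Nat.not_lt_zero k), ?_⟩
    simp [Nat.factorial]
  | succ m ih =>
    intro H hH
    have hH' : AnalyticAt ℂ (fun x => ((m : ℂ) + 1) * H x + (x - c) * deriv H x) c :=
      (analyticAt_const.mul hH).add
        ((analyticAt_id.sub analyticAt_const).mul (aux_derivAnalytic hH))
    have hev : deriv (fun x => (x - c) ^ (m + 1) * H x) =ᶠ[𝓝 c]
        fun x => (x - c) ^ m * (((m : ℂ) + 1) * H x + (x - c) * deriv H x) := by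
      filter_upwards [hH.eventually_analyticAt] with y hy
      have h1 := ((hasDerivAt_id y).sub_const c).pow (m + 1)
      simp only [Nat.add_sub_cancel, id_eq, mul_one] at h1
      have h2 := h1.mul hy.differentiableAt.hasDerivAt
      exact h2.deriv.trans (by simp only [Pi.pow_apply]; push_cast; ring)
    refine ⟨?_, ?_⟩
    · intro k hk
      match k, hk with
      | 0, _ => simp
      | (j + 1), hj =>
        rw [iteratedDeriv_succ', hev.iteratedDeriv_eq j]
        exact (ih _ hH').1 j (by omega)
    · rw [iteratedDeriv_succ', hev.iteratedDeriv_eq m, (ih _ hH').2]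
      simp only [sub_self, mul_zero, zero_mul, add_zero, Nat.factorial_succ]
      push_cast; ring

private lemma aux_extract {f : ℂ → ℂ} {c : ℂ} (hf : AnalyticAt ℂ f c) (n : ℕ)
    (hvan : ∀ k < n, iteratedDeriv k f c = 0) :
    ∃ K : ℂ → ℂ, AnalyticAt ℂ K c ∧ ∀ᶠ x in 𝓝 c, f x = (x - c) ^ n * K x := by
  by_cases htop : (analyticOrderAt f c) = ⊤
  · refine ⟨fun _ => 0, analyticAt_const, ?_⟩
    filter_upwards [analyticOrderAt_eq_top.mp htop] with x hx
    simp [hx]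
  · obtain ⟨G, hG, hG0, hfG⟩ := (hf.analyticOrderAt_eq_natCast (n := (analyticOrderAt f c).toNat)).mp
      (ENat.coe_toNat htop).symm
    have hfG' : ∀ᶠ x in 𝓝 c, f x = (x - c) ^ (analyticOrderAt f c).toNat * G x := by
      filter_upwards [hfG] with x hx; simpa [smul_eq_mul] using hx
    have hle : n ≤ (analyticOrderAt f c).toNat := by
      by_contra hlt
      push_neg at hlt
      have h1 := hvan _ hlt
      have h2 : iteratedDeriv (analyticOrderAt f c).toNat f c = (((analyticOrderAt f c).toNat).factorial : ℂ) * G c :=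
        (Filter.EventuallyEq.iteratedDeriv_eq _ hfG').trans (aux_pow_mul c _ G hG).2
      rw [h1] at h2
      have hfac : (((analyticOrderAt f c).toNat).factorial : ℂ) ≠ 0 :=
        Nat.cast_ne_zero.mpr (Nat.factorial_ne_zero _)
      exact hG0 ((mul_eq_zero.mp h2.symm).resolve_left hfac)
    refine ⟨fun x => (x - c) ^ ((analyticOrderAt f c).toNat - n) * G x,
      ((analyticAt_id.sub analyticAt_const).pow _).mul hG, ?_⟩
    filter_upwards [hfG'] with x hx
    rw [hx, ← mul_assoc, ← pow_add]
    congr 2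
    omega

private lemma aux_vanish {f K : ℂ → ℂ} {c : ℂ} (n : ℕ) (hK : AnalyticAt ℂ K c)
    (heq : ∀ᶠ x in 𝓝 c, f x = (x - c) ^ n * K x) :
    ∀ k < n, iteratedDeriv k f c = 0 := fun k hk =>
  (Filter.EventuallyEq.iteratedDeriv_eq k heq).trans ((aux_pow_mul c n K hK).1 k hk)

private lemma aux_reflect (k : ℕ) (f : ℂ → ℂ) (c : ℂ) :
    iteratedDeriv k (fun x => f (2 * c - x)) c = (-1) ^ k * iteratedDeriv k f c := by
  have h1 : (fun x => f (2 * c - x)) = fun x => f (2 * c + (-x)) := by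
    funext x; rw [sub_eq_add_neg]
  have h2 := iteratedDeriv_comp_neg k (fun y => f (2 * c + y)) c
  have h3 := iteratedDeriv_comp_const_add k f (2 * c)
  have h4 : 2 * c + -c = c := by ring
  rw [h1, h2, h3]
  simp only [smul_eq_mul]
  rw [h4]

private lemma aux_dslope {f : ℂ → ℂ} {c : ℂ} (hf : AnalyticAt ℂ f c) :
    AnalyticAt ℂ (dslope f c) c := by
  obtain ⟨p, hp⟩ := hf
  exact ⟨p.fslope, hp.has_fpower_series_dslope_fslope⟩

private lemma aux_iteratedDeriv_zero_fun {c : ℂ} : ∀ k : ℕ,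
    iteratedDeriv k (fun _ : ℂ => (0 : ℂ)) c = 0 := by
  intro k
  induction k with
  | zero => simp
  | succ k ih =>
    rw [iteratedDeriv_succ']
    have : deriv (fun _ : ℂ => (0 : ℂ)) = fun _ : ℂ => (0 : ℂ) := by funext y; simp
    rw [this]
    exact ih

private lemma aux_iteratedDeriv_const {k : ℕ} (hk : k ≠ 0) (a c : ℂ) :
    iteratedDeriv k (fun _ : ℂ => a) c = 0 := by
  obtain ⟨j, rfl⟩ := Nat.exists_eq_succ_of_ne_zero hk
  rw [iteratedDeriv_succ']
  have : deriv (fun _ : ℂ => a) = fun _ : ℂ => (0 : ℂ) := by funext y; simp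
  rw [this]
  exact aux_iteratedDeriv_zero_fun j

private lemma aux_comp_reflect {f : ℂ → ℂ} {c : ℂ} (hf : AnalyticAt ℂ f c) :
    AnalyticAt ℂ (fun x => f (2 * c - x)) c := by
  have h1 : AnalyticAt ℂ f ((fun x : ℂ => 2 * c - x) c) := by
    simpa [two_mul] using hf
  exact h1.comp (analyticAt_const.sub analyticAt_id)

/-- Lemma 2 of the paper, dominant case.
Let `N ≥ 2`, let `h` have form `(F_N)` at `x₀`, and let `u` be a solution of
`u'' + h·u = 0` of the dominant form `u(x) = (x−x₀)^{1−N} ψ(x)` with `ψ` analytic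
at `x₀`, `ψ(x₀) ≠ 0`, and odd Taylor coefficients of `ψ` of orders `1, 3, …, 2N−3`
vanishing. Then `h̃(x) = μ − h(x) − 2(u'(x)/u(x))²` has form `(F_{N−1})` at `x₀`:
`h̃(x) + (N−1)(N−2)/(x−x₀)²` extends analytically across `x₀` and the odd Taylor
coefficients of this extension of orders `1, 3, …, 2N−5` vanish (for `N = 2` the
quadratic term is absent, so `h̃` itself extends analytically across `x₀`). -/
theorem stmt_9 (N : ℕ) (hN : 2 ≤ N) (x₀ μ : ℂ)
    (h : ℂ → ℂ) (r : ℝ) (hr : 0 < r)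
    (hh : AnalyticOnNhd ℂ h (Metric.ball x₀ r \ {x₀}))
    (g : ℂ → ℂ) (hg : AnalyticAt ℂ g x₀)
    (hgh : ∀ x ∈ Metric.ball x₀ r \ {x₀},
      g x = h x + (N * (N - 1) : ℂ) / (x - x₀) ^ 2)
    (hgodd : ∀ k : ℕ, Odd k → (k : ℤ) ≤ 2 * (N : ℤ) - 3 → iteratedDeriv k g x₀ = 0)
    (ψ : ℂ → ℂ) (hψ : AnalyticAt ℂ ψ x₀) (hψ0 : ψ x₀ ≠ 0)
    (hψodd : ∀ k : ℕ, Odd k → (k : ℤ) ≤ 2 * (N : ℤ) - 3 → iteratedDeriv k ψ x₀ = 0)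
    (u : ℂ → ℂ)
    (hu : ∀ᶠ x in nhdsWithin x₀ {x₀}ᶜ, u x = (x - x₀) ^ (1 - (N : ℤ)) * ψ x)
    (hode : ∀ᶠ x in nhdsWithin x₀ {x₀}ᶜ, iteratedDeriv 2 u x + h x * u x = 0) :
    ∃ g' : ℂ → ℂ, AnalyticAt ℂ g' x₀ ∧
      (∀ᶠ x in nhdsWithin x₀ {x₀}ᶜ,
        g' x = (μ - h x - 2 * (deriv u x / u x) ^ 2)
          + (((N : ℂ) - 1) * ((N : ℂ) - 2)) / (x - x₀) ^ 2) ∧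
      (∀ k : ℕ, Odd k → (k : ℤ) ≤ 2 * (N : ℤ) - 5 → iteratedDeriv k g' x₀ = 0) := by
  classical
  -- the logarithmic derivative of ψ
  set φ : ℂ → ℂ := fun x => deriv ψ x / ψ x with hφdef
  have hψd : AnalyticAt ℂ (deriv ψ) x₀ := aux_derivAnalytic hψ
  have hφ : AnalyticAt ℂ φ x₀ := hψd.div hψ hψ0
  have hdψ0 : deriv ψ x₀ = 0 := by
    have h1 := hψodd 1 odd_one (by omega)
    rwa [iteratedDeriv_one] at h1
  have hφ0 : φ x₀ = 0 := by simp [hφdef, hdψ0]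
  set φ₁ : ℂ → ℂ := dslope φ x₀ with hφ₁def
  have hφ₁ : AnalyticAt ℂ φ₁ x₀ := aux_dslope hφ
  have hφ₁x : ∀ x : ℂ, x ≠ x₀ → φ x = (x - x₀) * φ₁ x := by
    intro x hx
    have ht0 : x - x₀ ≠ 0 := sub_ne_zero.mpr hx
    rw [hφ₁def, dslope_of_ne φ hx, slope_def_field, hφ0, sub_zero]
    field_simp
  set g' : ℂ → ℂ := fun x => μ - g x + 4 * ((N : ℂ) - 1) * φ₁ x - 2 * (φ x) ^ 2 with hg'def
  have hg'a : AnalyticAt ℂ g' x₀ :=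
    ((analyticAt_const.sub hg).add (analyticAt_const.mul hφ₁)).sub
      (analyticAt_const.mul (hφ.pow 2))
  refine ⟨g', hg'a, ?_, ?_⟩
  · -- eventual equality on the punctured neighbourhood
    obtain ⟨t, htopen, hxt, htsub⟩ := mem_nhdsWithin.mp hu
    have hS : {y : ℂ | AnalyticAt ℂ ψ y} ∩ {y : ℂ | ψ y ≠ 0} ∩ Metric.ball x₀ r ∈ 𝓝 x₀ :=
      Filter.inter_mem (Filter.inter_mem hψ.eventually_analyticAt
        (hψ.continuousAt.eventually_ne hψ0)) (Metric.ball_mem_nhds x₀ hr)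
    have htmem : t ∈ 𝓝 x₀ := htopen.mem_nhds hxt
    filter_upwards [self_mem_nhdsWithin, mem_nhdsWithin_of_mem_nhds hS,
      mem_nhdsWithin_of_mem_nhds htmem] with x hxne hxS hxt'
    have hxx0 : x ≠ x₀ := hxne
    obtain ⟨⟨hψa, hψx0⟩, hxr⟩ := hxS
    have ht0 : x - x₀ ≠ 0 := sub_ne_zero.mpr hxx0
    have huv : u =ᶠ[𝓝 x] fun y => (y - x₀) ^ (1 - (N : ℤ)) * ψ y := by
      filter_upwards [(htopen.inter isOpen_compl_singleton).mem_nhds ⟨hxt', hxne⟩] with y hy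
      exact htsub ⟨hy.1, hy.2⟩
    have hzm : (x - x₀) ^ (1 - (N : ℤ) - 1) = (x - x₀) ^ (1 - (N : ℤ)) * (x - x₀)⁻¹ :=
      zpow_sub_one₀ ht0 _
    have hψder : HasDerivAt ψ (deriv ψ x) x := hψa.differentiableAt.hasDerivAt
    have h1 : HasDerivAt (fun y : ℂ => (y - x₀) ^ (1 - (N : ℤ)))
        (((1 - (N : ℤ) : ℤ) : ℂ) * (x - x₀) ^ (1 - (N : ℤ) - 1) * 1) x := by
      have := (hasDerivAt_zpow (1 - (N : ℤ)) (x - x₀) (Or.inl ht0)).comp x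
        ((hasDerivAt_id x).sub_const x₀)
      simpa [Function.comp_def] using this
    have hud : deriv u x = ((1 - (N : ℤ) : ℤ) : ℂ) * (x - x₀) ^ (1 - (N : ℤ) - 1) * 1 * ψ x
        + (x - x₀) ^ (1 - (N : ℤ)) * deriv ψ x := by
      rw [huv.deriv_eq]
      exact (h1.mul hψder).deriv
    have huu : u x = (x - x₀) ^ (1 - (N : ℤ)) * ψ x := htsub ⟨hxt', hxne⟩
    have hA : (x - x₀) ^ (1 - (N : ℤ)) ≠ 0 := zpow_ne_zero _ ht0
    have hcast : ((1 - (N : ℤ) : ℤ) : ℂ) = 1 - (N : ℂ) := by push_cast; ring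
    have hψx0' : ψ x ≠ 0 := hψx0
    have hratio : deriv u x / u x = (1 - (N : ℂ)) / (x - x₀) + deriv ψ x / ψ x := by
      rw [hud, huu, hzm, hcast, div_eq_iff (mul_ne_zero hA hψx0')]
      field_simp
    have hhx : h x = g x - (N * (N - 1) : ℂ) / (x - x₀) ^ 2 := by
      rw [hgh x ⟨hxr, hxx0⟩]; ring
    have hlog : deriv ψ x / ψ x = (x - x₀) * φ₁ x := hφ₁x x hxx0
    have hratio2 : deriv u x / u x = (1 - (N : ℂ)) / (x - x₀) + (x - x₀) * φ₁ x := by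
      rw [hratio, hlog]
    have hφx : φ x = (x - x₀) * φ₁ x := hφ₁x x hxx0
    show μ - g x + 4 * ((N : ℂ) - 1) * φ₁ x - 2 * (φ x) ^ 2
      = (μ - h x - 2 * (deriv u x / u x) ^ 2)
          + (((N : ℂ) - 1) * ((N : ℂ) - 2)) / (x - x₀) ^ 2
    rw [hratio2, hhx, hφx]
    field_simp
    ring
  · intro k hkodd hkle
    have hk0 : k ≠ 0 := by rintro rfl; simp [Nat.odd_iff] at hkodd
    have hk3 : k < 2 * N - 3 := by omega
    have hk2 : k < 2 * N - 2 := by omega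
    have hkneg : ((-1 : ℂ)) ^ k = -1 := hkodd.neg_one_pow
    have h2x : (2 : ℂ) * x₀ - x₀ = x₀ := by ring
    have hσtend : Filter.Tendsto (fun y : ℂ => 2 * x₀ - y) (𝓝 x₀) (𝓝 x₀) := by
      have hc : ContinuousAt (fun y : ℂ => 2 * x₀ - y) x₀ :=
        (continuous_const.sub continuous_id).continuousAt
      simpa [h2x] using hc.tendsto
    have hψσ : AnalyticAt ℂ (fun y : ℂ => ψ (2 * x₀ - y)) x₀ := aux_comp_reflect hψ
    have hψσ0 : ψ (2 * x₀ - x₀) ≠ 0 := by rw [h2x]; exact hψ0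
    -- antisymmetric part of ψ vanishes to high order
    have hDvan : ∀ j, j < 2 * N - 2 →
        iteratedDeriv j (fun y => ψ y - ψ (2 * x₀ - y)) x₀ = 0 := by
      intro j hj
      have hsub := aux_iteratedDeriv_sub j ψ (fun y => ψ (2 * x₀ - y)) hψ hψσ
      rw [hsub, aux_reflect j ψ x₀]
      rcases Nat.even_or_odd j with hje | hjo
      · rw [hje.neg_one_pow]; ring
      · rw [hψodd j hjo (by omega)]; ring
    have hDa : AnalyticAt ℂ (fun y => ψ y - ψ (2 * x₀ - y)) x₀ := hψ.sub hψσ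
    obtain ⟨K, hK, hDK⟩ := aux_extract hDa (2 * N - 2) hDvan
    -- derivative of the antisymmetric part
    have hDK' : ∀ᶠ y in 𝓝 x₀, deriv (fun z => ψ z - ψ (2 * x₀ - z)) y
        = deriv (fun z => (z - x₀) ^ (2 * N - 2) * K z) y := by
      filter_upwards [hDK.eventually_nhds] with y hy
      exact Filter.EventuallyEq.deriv_eq hy
    set M : ℂ → ℂ := fun y => ((2 * N - 2 : ℕ) : ℂ) * ψ y * K y
        + (y - x₀) * ψ y * deriv K y - (y - x₀) * deriv ψ y * K y with hMdef
    have hM : AnalyticAt ℂ M x₀ :=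
      (((analyticAt_const.mul hψ).mul hK).add
        (((analyticAt_id.sub analyticAt_const).mul hψ).mul (aux_derivAnalytic hK))).sub
        (((analyticAt_id.sub analyticAt_const).mul (aux_derivAnalytic hψ)).mul hK)
    have hPM : ∀ᶠ y in 𝓝 x₀, deriv ψ y * ψ (2 * x₀ - y) + ψ y * deriv ψ (2 * x₀ - y)
        = (y - x₀) ^ (2 * N - 3) * M y := by
      filter_upwards [hDK, hDK', hψ.eventually_analyticAt,
        hσtend.eventually hψ.eventually_analyticAt, hK.eventually_analyticAt]
        with y h1 h2 hψy hψσy hKy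
      have hdσ : deriv (fun z : ℂ => ψ (2 * x₀ - z)) y = - deriv ψ (2 * x₀ - y) :=
        deriv_comp_const_sub ψ (2 * x₀) y
      have hdiffσ : DifferentiableAt ℂ (fun z : ℂ => ψ (2 * x₀ - z)) y :=
        DifferentiableAt.comp y hψσy.differentiableAt
          ((differentiableAt_const _).sub differentiableAt_id)
      have hdD : deriv (fun z => ψ z - ψ (2 * x₀ - z)) y
          = deriv ψ y + deriv ψ (2 * x₀ - y) := by
        rw [deriv_fun_sub hψy.differentiableAt hdiffσ, hdσ]; ring
      have hdR : deriv (fun z => (z - x₀) ^ (2 * N - 2) * K z) y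
          = ((2 * N - 2 : ℕ) : ℂ) * (y - x₀) ^ (2 * N - 3) * K y
            + (y - x₀) ^ (2 * N - 2) * deriv K y := by
        have hp := ((hasDerivAt_id y).sub_const x₀).pow (2 * N - 2)
        simp only [id_eq, mul_one] at hp
        have hp2 : 2 * N - 2 - 1 = 2 * N - 3 := by omega
        rw [hp2] at hp
        exact (hp.mul hKy.differentiableAt.hasDerivAt).deriv
      have hsum : deriv ψ y + deriv ψ (2 * x₀ - y)
          = ((2 * N - 2 : ℕ) : ℂ) * (y - x₀) ^ (2 * N - 3) * K y
            + (y - x₀) ^ (2 * N - 2) * deriv K y := by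
        rw [← hdD, h2, hdR]
      have hpow : (y - x₀) ^ (2 * N - 2) = (y - x₀) ^ (2 * N - 3) * (y - x₀) := by
        rw [← pow_succ]; congr 1; omega
      calc deriv ψ y * ψ (2 * x₀ - y) + ψ y * deriv ψ (2 * x₀ - y)
          = ψ y * (deriv ψ y + deriv ψ (2 * x₀ - y))
            - deriv ψ y * (ψ y - ψ (2 * x₀ - y)) := by ring
        _ = (y - x₀) ^ (2 * N - 3) * M y := by
            rw [hsum, h1, hpow, hMdef]; ring
    have hodd23 : Odd (2 * N - 3) := ⟨N - 2, by omega⟩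
    have hMM : ∀ᶠ y in 𝓝[≠] x₀, M (2 * x₀ - y) = - M y := by
      have hPM2 := hσtend.eventually hPM
      filter_upwards [hPM.filter_mono nhdsWithin_le_nhds,
        hPM2.filter_mono nhdsWithin_le_nhds, self_mem_nhdsWithin] with y h1 h2 hyne
      have hyne' : (y : ℂ) ≠ x₀ := hyne
      have ht0 : y - x₀ ≠ 0 := sub_ne_zero.mpr hyne'
      have e1 : 2 * x₀ - (2 * x₀ - y) = y := by ring
      rw [e1] at h2
      have e2 : 2 * x₀ - y - x₀ = -(y - x₀) := by ring
      rw [e2, hodd23.neg_pow] at h2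
      have key : (y - x₀) ^ (2 * N - 3) * M (2 * x₀ - y)
          = (y - x₀) ^ (2 * N - 3) * (- M y) := by linear_combination h2 - h1
      exact mul_left_cancel₀ (pow_ne_zero (2 * N - 3) ht0) key
    have hM0 : M x₀ = 0 := by
      have hMc : ContinuousAt M (2 * x₀ - x₀) := by rw [h2x]; exact hM.continuousAt
      have t1 : Filter.Tendsto (fun y => M (2 * x₀ - y)) (𝓝[≠] x₀) (𝓝 (M x₀)) := by
        have := (hMc.comp ((continuous_const.sub continuous_id).continuousAt (x := x₀))).tendsto
        rw [Function.comp_def] at this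
        simp only [h2x] at this
        exact this.mono_left nhdsWithin_le_nhds
      have t2 : Filter.Tendsto (fun y => - M y) (𝓝[≠] x₀) (𝓝 (- M x₀)) :=
        (hM.continuousAt.neg.tendsto).mono_left nhdsWithin_le_nhds
      have h9 := tendsto_nhds_unique ((t1.congr' hMM)) t2
      linear_combination h9 / 2
    set M₂ : ℂ → ℂ := dslope M x₀ with hM₂def
    have hM₂ : AnalyticAt ℂ M₂ x₀ := aux_dslope hM
    have hM2x : ∀ y : ℂ, M y = (y - x₀) * M₂ y := by
      intro y
      by_cases hy : y = x₀
      · subst hy; rw [hM0]; simp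
      · have ht0 : y - x₀ ≠ 0 := sub_ne_zero.mpr hy
        rw [hM₂def, dslope_of_ne M hy, slope_def_field, hM0, sub_zero]
        field_simp
    set Q : ℂ → ℂ := fun y => M₂ y / (ψ y * ψ (2 * x₀ - y)) with hQdef
    have hQa : AnalyticAt ℂ Q x₀ := hM₂.div (hψ.mul hψσ) (mul_ne_zero hψ0 hψσ0)
    have hψne : ∀ᶠ y in 𝓝 x₀, ψ y ≠ 0 := hψ.continuousAt.eventually_ne hψ0
    have hψσne : ∀ᶠ y in 𝓝 x₀, ψ (2 * x₀ - y) ≠ 0 := hσtend.eventually hψne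
    have heven : ∀ᶠ y in 𝓝 x₀, φ y + φ (2 * x₀ - y) = (y - x₀) ^ (2 * N - 2) * Q y := by
      filter_upwards [hPM, hψne, hψσne] with y h1 hy1 hy2
      have hpow : (y - x₀) ^ (2 * N - 2) = (y - x₀) ^ (2 * N - 3) * (y - x₀) := by
        rw [← pow_succ]; congr 1; omega
      have hnum : deriv ψ y * ψ (2 * x₀ - y) + ψ y * deriv ψ (2 * x₀ - y)
          = (y - x₀) ^ (2 * N - 2) * M₂ y := by
        rw [h1, hM2x y, hpow]; ring
      show deriv ψ y / ψ y + deriv ψ (2 * x₀ - y) / ψ (2 * x₀ - y) = _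
      rw [div_add_div _ _ hy1 hy2, hnum, hQdef]
      simp only []
      rw [mul_div_assoc]
    have hFb : ∀ᶠ y in 𝓝 x₀, φ₁ y - φ₁ (2 * x₀ - y) = (y - x₀) ^ (2 * N - 3) * Q y := by
      filter_upwards [heven] with y h1
      by_cases hy : y = x₀
      · subst hy
        rw [h2x, sub_self, sub_self, zero_pow (by omega : 2 * N - 3 ≠ 0), zero_mul]
      · have ht0 : y - x₀ ≠ 0 := sub_ne_zero.mpr hy
        have hσy : 2 * x₀ - y ≠ x₀ := fun hc => hy (by linear_combination -hc)
        have b1 : φ y = (y - x₀) * φ₁ y := hφ₁x y hy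
        have b2 : φ (2 * x₀ - y) = (2 * x₀ - y - x₀) * φ₁ (2 * x₀ - y) := hφ₁x _ hσy
        have e2 : 2 * x₀ - y - x₀ = -(y - x₀) := by ring
        rw [b1, b2, e2] at h1
        have hpow : (y - x₀) ^ (2 * N - 2) = (y - x₀) * (y - x₀) ^ (2 * N - 3) := by
          rw [← pow_succ']; congr 1; omega
        rw [hpow] at h1
        refine mul_left_cancel₀ ht0 ?_
        linear_combination h1
    have hFbvan := aux_vanish (2 * N - 3) hQa hFb
    have hφ₁k : iteratedDeriv k φ₁ x₀ = 0 := by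
      have hzb := hFbvan k hk3
      have esub := aux_iteratedDeriv_sub k φ₁ (fun y => φ₁ (2 * x₀ - y)) hφ₁
        (aux_comp_reflect hφ₁)
      have erefl := aux_reflect k φ₁ x₀
      rw [esub, erefl, hkneg] at hzb
      linear_combination hzb / 2
    have hFc : ∀ᶠ y in 𝓝 x₀, (φ y) ^ 2 - (φ (2 * x₀ - y)) ^ 2
        = (y - x₀) ^ (2 * N - 2) * ((φ y - φ (2 * x₀ - y)) * Q y) := by
      filter_upwards [heven] with y h1
      linear_combination (φ y - φ (2 * x₀ - y)) * h1
    have hφσa : AnalyticAt ℂ (fun y : ℂ => φ (2 * x₀ - y)) x₀ := aux_comp_reflect hφ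
    have hFcvan := aux_vanish (2 * N - 2) ((hφ.sub hφσa).mul hQa) hFc
    have hφ2k : iteratedDeriv k (fun y => (φ y) ^ 2) x₀ = 0 := by
      have hzc := hFcvan k hk2
      have esub := aux_iteratedDeriv_sub k (fun y => (φ y) ^ 2)
        (fun y => (φ (2 * x₀ - y)) ^ 2) (hφ.pow 2) (hφσa.pow 2)
      have erefl := aux_reflect k (fun y => (φ y) ^ 2) x₀
      rw [esub, erefl, hkneg] at hzc
      linear_combination hzc / 2
    -- assemble
    have hgk : iteratedDeriv k g x₀ = 0 := hgodd k hkodd (by omega)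
    have e1 := aux_iteratedDeriv_sub k (fun x => μ - g x + 4 * ((N : ℂ) - 1) * φ₁ x)
      (fun x => 2 * (φ x) ^ 2)
      ((analyticAt_const.sub hg).add (analyticAt_const.mul hφ₁))
      (analyticAt_const.mul (hφ.pow 2))
    have e2 := aux_iteratedDeriv_add k (fun x => μ - g x)
      (fun x => 4 * ((N : ℂ) - 1) * φ₁ x) (analyticAt_const.sub hg)
      (analyticAt_const.mul hφ₁)
    have e3 := aux_iteratedDeriv_sub k (fun _ => μ) g analyticAt_const hg
    have e4 : iteratedDeriv k (fun x => 4 * ((N : ℂ) - 1) * φ₁ x) x₀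
        = 4 * ((N : ℂ) - 1) * iteratedDeriv k φ₁ x₀ :=
      aux_iteratedDeriv_const_mul k φ₁ hφ₁
    have e5 : iteratedDeriv k (fun x => 2 * (φ x) ^ 2) x₀
        = 2 * iteratedDeriv k (fun y => (φ y) ^ 2) x₀ :=
      aux_iteratedDeriv_const_mul k (fun y => (φ y) ^ 2) (hφ.pow 2)
    rw [hg'def]
    rw [e1, e2, e3, e4, e5, hgk, hφ₁k, hφ2k, aux_iteratedDeriv_const hk0 μ x₀]
    ring
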